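/- arXiv:0805.0141 — 2 statements merged into one kernel-verified Lean document; each statement's English description precedes it below -/
import Mathlib

section
/- Let f be a C¹ quaternionic function on an open set Ω ⊆ H disjoint from the real axis, and define u := (1/2)(∂/∂ι)(ιf) and v := (1/2)(∂/∂ι)(f). Then f = u + ιv, and f is left-Cullen-regular if and only if D_l f = −2v/r and D_l(ιf) = −2u/r on Ω. -/
/-- The quaternion unit `i`. -/
noncomputable def qI : Quaternion ℝ := ⟨0, 1, 0, 0⟩

/-- The quaternion unit `j`. -/
noncomputable def qJ : Quaternion ℝ := ⟨0, 0, 1, 0⟩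

/-- The quaternion unit `k`. -/
noncomputable def qK : Quaternion ℝ := ⟨0, 0, 0, 1⟩

/-- The unit imaginary part `ι(p) = Im p / ‖Im p‖`. -/
noncomputable def iotaOf (p : Quaternion ℝ) : Quaternion ℝ := (‖p.im‖)⁻¹ • p.im

/-- The left-Fueter operator `D_l = ∂/∂t + i ∂/∂x + j ∂/∂y + k ∂/∂z`. -/
noncomputable def fueterL (f : Quaternion ℝ → Quaternion ℝ) (p : Quaternion ℝ) :
    Quaternion ℝ :=
  fderiv ℝ f p 1 + qI * fderiv ℝ f p qI
    + qJ * fderiv ℝ f p qJ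
    + qK * fderiv ℝ f p qK

/-- The Cullen operator `∂/∂t + ι ∂/∂r` in the slice coordinates `p = t + rι`. -/
noncomputable def cullenOp (f : Quaternion ℝ → Quaternion ℝ) (p : Quaternion ℝ) :
    Quaternion ℝ :=
  fderiv ℝ f p 1 + iotaOf p * fderiv ℝ f p (iotaOf p)

/-- The angular operator `∂/∂ι`, defined off the real axis via the
decomposition `D_l = ∂/∂t + ι ∂/∂r − (1/r) ∂/∂ι`. -/
noncomputable def angularOp (f : Quaternion ℝ → Quaternion ℝ) (p : Quaternion ℝ) :
    Quaternion ℝ :=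
  ‖p.im‖ • (cullenOp f p - fueterL f p)

open Quaternion RealInnerProductSpace

/-! ### Auxiliary material -/

noncomputable def imCLM : Quaternion ℝ →L[ℝ] Quaternion ℝ :=
  LinearMap.toContinuousLinearMap
    { toFun := Quaternion.im
      map_add' := by intro a b; ext <;> simp
      map_smul' := by intro c a; ext <;> simp }

@[simp] lemma imCLM_apply (q : Quaternion ℝ) : imCLM q = q.im := rfl

noncomputable def iotaDeriv (p : Quaternion ℝ) : Quaternion ℝ →L[ℝ] Quaternion ℝ :=
  ‖p.im‖⁻¹ • imCLM +
    (((-(‖p.im‖ ^ 3)⁻¹) • ((innerSL ℝ p.im).comp imCLM)).smulRight p.im)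

lemma iotaDeriv_apply (p w : Quaternion ℝ) :
    iotaDeriv p w = ‖p.im‖⁻¹ • w.im - ((‖p.im‖ ^ 3)⁻¹ * ⟪p.im, w.im⟫) • p.im := by
  simp [iotaDeriv, sub_eq_add_neg, neg_smul]

lemma hasFDerivAt_iotaOf (p : Quaternion ℝ) (hp : p.im ≠ 0) :
    HasFDerivAt iotaOf (iotaDeriv p) p := by
  have hr : (0:ℝ) < ‖p.im‖ := norm_pos_iff.mpr hp
  have h1 : HasFDerivAt (fun q : Quaternion ℝ => ⟪q.im, q.im⟫)
      ((fderivInnerCLM ℝ (p.im, p.im)).comp (imCLM.prod imCLM)) p := by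
    exact HasFDerivAt.inner ℝ (imCLM.hasFDerivAt) (imCLM.hasFDerivAt)
  have hinner : ⟪p.im, p.im⟫ = ‖p.im‖ * ‖p.im‖ := by
    rw [Quaternion.inner_self]; exact Quaternion.normSq_eq_norm_mul_self p.im
  have hip : ⟪p.im, p.im⟫ ≠ 0 := by rw [hinner]; positivity
  have h2 : HasFDerivAt (fun q : Quaternion ℝ => ‖q.im‖)
      ((1 / (2 * Real.sqrt ⟪p.im, p.im⟫)) •
        ((fderivInnerCLM ℝ (p.im, p.im)).comp (imCLM.prod imCLM))) p := by
    have h := h1.sqrt hip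
    have hfun : (fun q : Quaternion ℝ => Real.sqrt ⟪q.im, q.im⟫)
        = (fun q : Quaternion ℝ => ‖q.im‖) := by
      funext q
      rw [Quaternion.inner_self, Quaternion.normSq_eq_norm_mul_self,
        Real.sqrt_mul_self (norm_nonneg _)]
    rwa [hfun] at h
  have h3 : HasFDerivAt (fun q : Quaternion ℝ => ‖q.im‖⁻¹)
      ((-(‖p.im‖ ^ 2)⁻¹) • ((1 / (2 * Real.sqrt ⟪p.im, p.im⟫)) •
        ((fderivInnerCLM ℝ (p.im, p.im)).comp (imCLM.prod imCLM)))) p := by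
    have h := (hasDerivAt_inv hr.ne').comp_hasFDerivAt p h2
    exact h
  have h4 := h3.smul imCLM.hasFDerivAt
  have hfun2 : (fun q : Quaternion ℝ => ‖q.im‖⁻¹ • imCLM q) = iotaOf := by
    funext q; simp [iotaOf]
  rw [show ((fun q : Quaternion ℝ => ‖q.im‖⁻¹) • ⇑imCLM) = iotaOf from hfun2] at h4
  refine h4.congr_fderiv (Eq.symm ?_)
  refine ContinuousLinearMap.ext fun w => ?_
  have hsq : Real.sqrt ⟪p.im, p.im⟫ = ‖p.im‖ := by
    rw [hinner, Real.sqrt_mul_self (norm_nonneg _)]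
  simp only [iotaDeriv, ContinuousLinearMap.add_apply, ContinuousLinearMap.smul_apply,
    ContinuousLinearMap.smulRight_apply, ContinuousLinearMap.coe_smul',
    ContinuousLinearMap.coe_comp', Function.comp_apply, imCLM_apply, innerSL_apply_apply,
    ContinuousLinearMap.prod_apply, fderivInnerCLM_apply, Pi.smul_apply, hsq]
  rw [real_inner_comm w.im p.im]
  have hc : ((-(‖p.im‖ ^ 3)⁻¹ • ⟪w.im, p.im⟫ : ℝ))
      = -(‖p.im‖ ^ 2)⁻¹ • (1 / (2 * ‖p.im‖)) • (⟪w.im, p.im⟫ + ⟪w.im, p.im⟫) := by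
    have hr' : ‖p.im‖ ≠ 0 := hr.ne'
    simp only [smul_eq_mul]
    field_simp
    ring
  rw [← hc]

lemma qI_re : qI.re = 0 := rfl
lemma qI_imI : qI.imI = 1 := rfl
lemma qI_imJ : qI.imJ = 0 := rfl
lemma qI_imK : qI.imK = 0 := rfl
lemma qJ_re : qJ.re = 0 := rfl
lemma qJ_imI : qJ.imI = 0 := rfl
lemma qJ_imJ : qJ.imJ = 1 := rfl
lemma qJ_imK : qJ.imK = 0 := rfl
lemma qK_re : qK.re = 0 := rfl
lemma qK_imI : qK.imI = 0 := rfl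
lemma qK_imJ : qK.imJ = 0 := rfl
lemma qK_imK : qK.imK = 1 := rfl

@[simp] lemma im_one' : (1 : Quaternion ℝ).im = 0 := by ext <;> simp
@[simp] lemma im_qI : qI.im = qI := by ext <;> rfl
@[simp] lemma im_qJ : qJ.im = qJ := by ext <;> rfl
@[simp] lemma im_qK : qK.im = qK := by ext <;> rfl
@[simp] lemma im_iotaOf (p : Quaternion ℝ) : (iotaOf p).im = iotaOf p := by
  simp [iotaOf, Quaternion.im_smul]

lemma inner_im_qI (p : Quaternion ℝ) : ⟪p.im, qI⟫ = p.imI := by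
  simp [Quaternion.inner_def, Quaternion.re_mul, qI_re, qI_imI, qI_imJ, qI_imK]
lemma inner_im_qJ (p : Quaternion ℝ) : ⟪p.im, qJ⟫ = p.imJ := by
  simp [Quaternion.inner_def, Quaternion.re_mul, qJ_re, qJ_imI, qJ_imJ, qJ_imK]
lemma inner_im_qK (p : Quaternion ℝ) : ⟪p.im, qK⟫ = p.imK := by
  simp [Quaternion.inner_def, Quaternion.re_mul, qK_re, qK_imI, qK_imJ, qK_imK]

lemma iotaDeriv_one (p : Quaternion ℝ) : iotaDeriv p 1 = 0 := by
  rw [iotaDeriv_apply]; simp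

lemma iotaDeriv_iota (p : Quaternion ℝ) (hp : p.im ≠ 0) :
    iotaDeriv p (iotaOf p) = 0 := by
  have hr : (0:ℝ) < ‖p.im‖ := norm_pos_iff.mpr hp
  rw [iotaDeriv_apply, im_iotaOf]
  rw [show (iotaOf p) = ‖p.im‖⁻¹ • p.im from rfl]
  rw [real_inner_smul_right, Quaternion.inner_self, Quaternion.normSq_eq_norm_mul_self,
    smul_smul]
  rw [show ((‖p.im‖ ^ 3)⁻¹ * (‖p.im‖⁻¹ * (‖p.im‖ * ‖p.im‖))) = ‖p.im‖⁻¹ * ‖p.im‖⁻¹ by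
    field_simp]
  rw [sub_eq_zero]

lemma iotaDeriv_qI (p : Quaternion ℝ) :
    iotaDeriv p qI = ‖p.im‖⁻¹ • qI - ((‖p.im‖ ^ 3)⁻¹ * p.imI) • p.im := by
  rw [iotaDeriv_apply, im_qI, inner_im_qI]

lemma iotaDeriv_qJ (p : Quaternion ℝ) :
    iotaDeriv p qJ = ‖p.im‖⁻¹ • qJ - ((‖p.im‖ ^ 3)⁻¹ * p.imJ) • p.im := by
  rw [iotaDeriv_apply, im_qJ, inner_im_qJ]

lemma iotaDeriv_qK (p : Quaternion ℝ) :
    iotaDeriv p qK = ‖p.im‖⁻¹ • qK - ((‖p.im‖ ^ 3)⁻¹ * p.imK) • p.im := by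
  rw [iotaDeriv_apply, im_qK, inner_im_qK]
lemma norm_im_sq (p : Quaternion ℝ) :
    p.imI ^ 2 + p.imJ ^ 2 + p.imK ^ 2 = ‖p.im‖ ^ 2 := by
  have h := Quaternion.normSq_eq_norm_mul_self p.im
  rw [Quaternion.normSq_def'] at h
  simp only [Quaternion.re_im, Quaternion.imI_im, Quaternion.imJ_im, Quaternion.imK_im] at h
  linear_combination h

lemma anticomm_qI (p : Quaternion ℝ) :
    qI * iotaOf p + iotaOf p * qI = (((-2) * p.imI / ‖p.im‖ : ℝ) : Quaternion ℝ) := by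
  rw [show (iotaOf p) = ‖p.im‖⁻¹ • p.im from rfl, mul_smul_comm, smul_mul_assoc, ← smul_add]
  have h : qI * p.im + p.im * qI = (((-2) * p.imI : ℝ) : Quaternion ℝ) := by
    ext <;> simp [qI_re, qI_imI, qI_imJ, qI_imK, Quaternion.re_mul, Quaternion.imI_mul, Quaternion.imJ_mul,
      Quaternion.imK_mul] <;> ring
  rw [h, Quaternion.smul_coe]
  norm_num [div_eq_inv_mul, mul_comm]

lemma anticomm_qJ (p : Quaternion ℝ) :
    qJ * iotaOf p + iotaOf p * qJ = (((-2) * p.imJ / ‖p.im‖ : ℝ) : Quaternion ℝ) := by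
  rw [show (iotaOf p) = ‖p.im‖⁻¹ • p.im from rfl, mul_smul_comm, smul_mul_assoc, ← smul_add]
  have h : qJ * p.im + p.im * qJ = (((-2) * p.imJ : ℝ) : Quaternion ℝ) := by
    ext <;> simp [qJ_re, qJ_imI, qJ_imJ, qJ_imK, Quaternion.re_mul, Quaternion.imI_mul, Quaternion.imJ_mul,
      Quaternion.imK_mul] <;> ring
  rw [h, Quaternion.smul_coe]
  norm_num [div_eq_inv_mul, mul_comm]

lemma anticomm_qK (p : Quaternion ℝ) :
    qK * iotaOf p + iotaOf p * qK = (((-2) * p.imK / ‖p.im‖ : ℝ) : Quaternion ℝ) := by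
  rw [show (iotaOf p) = ‖p.im‖⁻¹ • p.im from rfl, mul_smul_comm, smul_mul_assoc, ← smul_add]
  have h : qK * p.im + p.im * qK = (((-2) * p.imK : ℝ) : Quaternion ℝ) := by
    ext <;> simp [qK_re, qK_imI, qK_imJ, qK_imK, Quaternion.re_mul, Quaternion.imI_mul, Quaternion.imJ_mul,
      Quaternion.imK_mul] <;> ring
  rw [h, Quaternion.smul_coe]
  norm_num [div_eq_inv_mul, mul_comm]

lemma iota_mul_self (p : Quaternion ℝ) (hp : p.im ≠ 0) :
    iotaOf p * iotaOf p = -1 := by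
  have hr : (0:ℝ) < ‖p.im‖ := norm_pos_iff.mpr hp
  rw [show (iotaOf p) = ‖p.im‖⁻¹ • p.im from rfl, smul_mul_assoc, mul_smul_comm, smul_smul]
  have ha : p.im * p.im = ((-(‖p.im‖ * ‖p.im‖) : ℝ) : Quaternion ℝ) := by
    have h := Quaternion.im_sq p
    rw [sq] at h
    rw [h, Quaternion.normSq_eq_norm_mul_self]
    exact (Quaternion.coe_neg _).symm
  rw [ha, Quaternion.smul_coe]
  rw [show (‖p.im‖⁻¹ * ‖p.im‖⁻¹ * -(‖p.im‖ * ‖p.im‖) : ℝ) = -1 by field_simp]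
  norm_cast

lemma Lsum (p : Quaternion ℝ) (hp : p.im ≠ 0) :
    qI * iotaDeriv p qI + qJ * iotaDeriv p qJ + qK * iotaDeriv p qK
      = ((-2) / ‖p.im‖ : ℝ) • (1 : Quaternion ℝ) := by
  have hr : (0:ℝ) < ‖p.im‖ := norm_pos_iff.mpr hp
  have hr2 := norm_im_sq p
  rw [iotaDeriv_qI, iotaDeriv_qJ, iotaDeriv_qK]
  have hsimp : True := trivial
  ext <;>
    simp [qI_re, qI_imI, qI_imJ, qI_imK, qJ_re, qJ_imI, qJ_imJ, qJ_imK, qK_re, qK_imI, qK_imJ, qK_imK, Quaternion.re_mul, Quaternion.imI_mul, Quaternion.imJ_mul,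
      Quaternion.imK_mul, Quaternion.re_sub, Quaternion.imI_sub, Quaternion.imJ_sub,
      Quaternion.imK_sub, Quaternion.re_smul, Quaternion.imI_smul, Quaternion.imJ_smul,
      Quaternion.imK_smul, smul_eq_mul, Quaternion.re_coe, Quaternion.imI_coe,
      Quaternion.imJ_coe, Quaternion.imK_coe] <;>
    field_simp <;>
    [linear_combination hr2; ring; ring; ring]
lemma key (f : Quaternion ℝ → Quaternion ℝ) (p : Quaternion ℝ) (hp : p.im ≠ 0)
    (hdf : DifferentiableAt ℝ f p) :
    cullenOp (fun q => iotaOf q * f q) p = iotaOf p * cullenOp f p ∧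
      angularOp (fun q => iotaOf q * f q) p + iotaOf p * angularOp f p
        = (2 : ℝ) • f p := by
  have hr : (0:ℝ) < ‖p.im‖ := norm_pos_iff.mpr hp
  have hg : HasFDerivAt (fun q => iotaOf q * f q)
      (iotaOf p • (fderiv ℝ f p) + (iotaDeriv p).smulRight (f p)) p :=
    (hasFDerivAt_iotaOf p hp).mul' hdf.hasFDerivAt
  have hDg : ∀ w, fderiv ℝ (fun q => iotaOf q * f q) p w
      = iotaOf p * (fderiv ℝ f p w) + (iotaDeriv p w) * f p := by
    intro w
    rw [hg.fderiv]
    simp [smul_eq_mul]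
  have hAι : fderiv ℝ f p (iotaOf p)
      = ‖p.im‖⁻¹ • (p.imI • fderiv ℝ f p qI + p.imJ • fderiv ℝ f p qJ
          + p.imK • fderiv ℝ f p qK) := by
    have hpim : p.im = p.imI • qI + p.imJ • qJ + p.imK • qK := by
      ext <;> simp [qI_re, qI_imI, qI_imJ, qI_imK, qJ_re, qJ_imI, qJ_imJ, qJ_imK, qK_re, qK_imI, qK_imJ, qK_imK]
    have h1 : fderiv ℝ f p p.im
        = p.imI • fderiv ℝ f p qI + p.imJ • fderiv ℝ f p qJ + p.imK • fderiv ℝ f p qK := by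
      conv_lhs => rw [hpim]
      simp
    rw [show (iotaOf p) = ‖p.im‖⁻¹ • p.im from rfl, ContinuousLinearMap.map_smul, h1]
  constructor
  · -- Cullen of ι·f equals ι · Cullen f
    simp only [cullenOp, hDg, iotaDeriv_one, iotaDeriv_iota p hp, zero_mul, add_zero, mul_add]
  · -- angular identity
    simp only [angularOp, cullenOp, fueterL, hDg, iotaDeriv_one, iotaDeriv_iota p hp,
      zero_mul, add_zero]
    rw [mul_smul_comm, ← smul_add]
    have hmain :
        (iotaOf p * fderiv ℝ f p 1 + iotaOf p * (iotaOf p * fderiv ℝ f p (iotaOf p))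
            - (iotaOf p * fderiv ℝ f p 1
              + qI * (iotaOf p * fderiv ℝ f p qI + iotaDeriv p qI * f p)
              + qJ * (iotaOf p * fderiv ℝ f p qJ + iotaDeriv p qJ * f p)
              + qK * (iotaOf p * fderiv ℝ f p qK + iotaDeriv p qK * f p))
          + iotaOf p * (fderiv ℝ f p 1 + iotaOf p * fderiv ℝ f p (iotaOf p)
              - (fderiv ℝ f p 1 + qI * fderiv ℝ f p qI + qJ * fderiv ℝ f p qJ
                + qK * fderiv ℝ f p qK)))
          = (2 / ‖p.im‖ : ℝ) • f p := by
      have hprodI : qI * (iotaOf p * fderiv ℝ f p qI) + iotaOf p * (qI * fderiv ℝ f p qI)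
          = ((-2) * p.imI / ‖p.im‖ : ℝ) • fderiv ℝ f p qI := by
        rw [← mul_assoc, ← mul_assoc, ← add_mul, anticomm_qI, Quaternion.coe_mul_eq_smul]
      have hprodJ : qJ * (iotaOf p * fderiv ℝ f p qJ) + iotaOf p * (qJ * fderiv ℝ f p qJ)
          = ((-2) * p.imJ / ‖p.im‖ : ℝ) • fderiv ℝ f p qJ := by
        rw [← mul_assoc, ← mul_assoc, ← add_mul, anticomm_qJ, Quaternion.coe_mul_eq_smul]
      have hprodK : qK * (iotaOf p * fderiv ℝ f p qK) + iotaOf p * (qK * fderiv ℝ f p qK)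
          = ((-2) * p.imK / ‖p.im‖ : ℝ) • fderiv ℝ f p qK := by
        rw [← mul_assoc, ← mul_assoc, ← add_mul, anticomm_qK, Quaternion.coe_mul_eq_smul]
      have hprodfp : qI * (iotaDeriv p qI * f p) + qJ * (iotaDeriv p qJ * f p)
          + qK * (iotaDeriv p qK * f p) = ((-2) / ‖p.im‖ : ℝ) • f p := by
        rw [← mul_assoc, ← mul_assoc, ← mul_assoc, ← add_mul, ← add_mul, Lsum p hp,
          smul_mul_assoc, one_mul]
      have hii : iotaOf p * (iotaOf p * fderiv ℝ f p (iotaOf p))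
          = - fderiv ℝ f p (iotaOf p) := by
        rw [← mul_assoc, iota_mul_self p hp, neg_one_mul]
      have hexpand :
          (iotaOf p * fderiv ℝ f p 1 + iotaOf p * (iotaOf p * fderiv ℝ f p (iotaOf p))
            - (iotaOf p * fderiv ℝ f p 1
              + qI * (iotaOf p * fderiv ℝ f p qI + iotaDeriv p qI * f p)
              + qJ * (iotaOf p * fderiv ℝ f p qJ + iotaDeriv p qJ * f p)
              + qK * (iotaOf p * fderiv ℝ f p qK + iotaDeriv p qK * f p))
          + iotaOf p * (fderiv ℝ f p 1 + iotaOf p * fderiv ℝ f p (iotaOf p)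
              - (fderiv ℝ f p 1 + qI * fderiv ℝ f p qI + qJ * fderiv ℝ f p qJ
                + qK * fderiv ℝ f p qK)))
          = (2 : ℕ) • (iotaOf p * (iotaOf p * fderiv ℝ f p (iotaOf p)))
            - ((qI * (iotaOf p * fderiv ℝ f p qI) + iotaOf p * (qI * fderiv ℝ f p qI))
              + (qJ * (iotaOf p * fderiv ℝ f p qJ) + iotaOf p * (qJ * fderiv ℝ f p qJ))
              + (qK * (iotaOf p * fderiv ℝ f p qK) + iotaOf p * (qK * fderiv ℝ f p qK)))
            - (qI * (iotaDeriv p qI * f p) + qJ * (iotaDeriv p qJ * f p)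
              + qK * (iotaDeriv p qK * f p)) := by
        simp only [mul_add, mul_sub]
        abel
      rw [hexpand, hprodI, hprodJ, hprodK, hprodfp, hii, hAι]
      match_scalars <;> (field_simp; try ring)
    rw [hmain, smul_smul]
    rw [show (‖p.im‖ * (2 / ‖p.im‖) : ℝ) = 2 by field_simp]
lemma fueter_iff_aux (F C : Quaternion ℝ) (r : ℝ) (hr : r ≠ 0) :
    F = (-2 / r) • ((1 / 2 : ℝ) • (r • (C - F))) ↔ C = 0 := by
  have h : (-2 / r : ℝ) • ((1 / 2 : ℝ) • (r • (C - F))) = F - C := by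
    rw [smul_smul, smul_smul, show (-2 / r * (1 / 2) * r : ℝ) = -1 by field_simp]
    module
  rw [h, eq_comm, sub_eq_self]

/-- For `f` of class `C¹` on an open set `Ω` off the real axis, with
`u := (1/2)(∂/∂ι)(ι f)` and `v := (1/2)(∂/∂ι) f`, one has `f = u + ι v`, and `f`
is left-Cullen-regular iff `D_l f = −2v/r` and `D_l(ι f) = −2u/r` on `Ω`. -/
theorem cullenRegular_iff_fueter_eqs
    (Ω : Set (Quaternion ℝ)) (hΩ : IsOpen Ω) (hax : ∀ p ∈ Ω, p.im ≠ 0)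
    (f : Quaternion ℝ → Quaternion ℝ) (hf : ContDiffOn ℝ 1 f Ω)
    (u v : Quaternion ℝ → Quaternion ℝ)
    (hu : ∀ p, u p = (1 / 2 : ℝ) • angularOp (fun q => iotaOf q * f q) p)
    (hv : ∀ p, v p = (1 / 2 : ℝ) • angularOp f p) :
    (∀ p ∈ Ω, f p = u p + iotaOf p * v p) ∧
      ((∀ p ∈ Ω, cullenOp f p = 0) ↔
        ∀ p ∈ Ω, fueterL f p = (-2 / ‖p.im‖) • v p ∧
          fueterL (fun q => iotaOf q * f q) p = (-2 / ‖p.im‖) • u p) := by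
  have hdiff : ∀ p ∈ Ω, DifferentiableAt ℝ f p := fun p hpΩ =>
    ((hf.differentiableOn one_ne_zero).differentiableAt (hΩ.mem_nhds hpΩ))
  constructor
  · intro p hpΩ
    have hp := hax p hpΩ
    have hkey := (key f p hp (hdiff p hpΩ)).2
    rw [hu, hv, mul_smul_comm, ← smul_add, hkey, smul_smul]
    norm_num
  · constructor
    · intro h p hpΩ
      have hp := hax p hpΩ
      have hr : ‖p.im‖ ≠ 0 := norm_ne_zero_iff.mpr hp
      have hC := h p hpΩ
      have hCg : cullenOp (fun q => iotaOf q * f q) p = 0 := by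
        rw [(key f p hp (hdiff p hpΩ)).1, hC, mul_zero]
      constructor
      · rw [hv, angularOp]
        exact (fueter_iff_aux (fueterL f p) (cullenOp f p) ‖p.im‖ hr).mpr hC
      · rw [hu, angularOp]
        exact (fueter_iff_aux (fueterL (fun q => iotaOf q * f q) p)
          (cullenOp (fun q => iotaOf q * f q) p) ‖p.im‖ hr).mpr hCg
    · intro h p hpΩ
      have hp := hax p hpΩ
      have hr : ‖p.im‖ ≠ 0 := norm_ne_zero_iff.mpr hp
      have h1 := (h p hpΩ).1
      rw [hv, angularOp] at h1
      exact (fueter_iff_aux (fueterL f p) (cullenOp f p) ‖p.im‖ hr).mp h1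
end

section
/- For any purely imaginary unit quaternion ι and any n ∈ ℕ, the function F : H → H defined (using slice coordinates) by F(t + rι') := (t + rι')ⁿ for the slice ι' = ι, i.e., the quaternionic power function p ↦ pⁿ, satisfies D_l Δ (pⁿ) = 0 on H, where Δ is the four-dimensional Laplacian and D_l the left-Fueter operator (Fueter's theorem for polynomials). -/
/-- The four-dimensional Laplacian `Δ = ∂²/∂t² + ∂²/∂x² + ∂²/∂y² + ∂²/∂z²`. -/
noncomputable def quatLaplacian (f : Quaternion ℝ → Quaternion ℝ)
    (p : Quaternion ℝ) : Quaternion ℝ :=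
  fderiv ℝ (fun q => fderiv ℝ f q 1) p 1
    + fderiv ℝ (fun q => fderiv ℝ f q qI) p qI
    + fderiv ℝ (fun q => fderiv ℝ f q qJ) p qJ
    + fderiv ℝ (fun q => fderiv ℝ f q qK) p qK

open ContinuousLinearMap Finset
local notation "H" => Quaternion ℝ

noncomputable def powD (n : ℕ) (p : H) : H →L[ℝ] H :=
  ∑ s ∈ Finset.range n, mulLeftRight ℝ H (p ^ s) (p ^ (n - 1 - s))

lemma powD_apply (n : ℕ) (p v : H) :
    powD n p v = ∑ s ∈ Finset.range n, p ^ s * v * p ^ (n - 1 - s) := by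
  simp [powD]

lemma hasFDerivAt_qpow (n : ℕ) (p : H) :
    HasFDerivAt (fun q : H => q ^ n) (powD n p) p := by
  induction n with
  | zero => simpa [powD] using hasFDerivAt_const (1 : H) p
  | succ n ih =>
    have h := ih.mul' (hasFDerivAt_id p)
    have h2 : HasFDerivAt (fun q : H => q ^ (n+1))
        (p ^ n • ContinuousLinearMap.id ℝ H + (powD n p).smulRight p) p := by
      have e : (fun q : H => q ^ (n+1)) = fun q : H => q ^ n * q := by
        funext q; rw [pow_succ]
      rw [e]; exact h.congr_fderiv (by ext v <;> simp)
    have e2 : powD (n+1) p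
        = p ^ n • ContinuousLinearMap.id ℝ H + (powD n p).smulRight p := by
      refine ContinuousLinearMap.ext fun v => ?_
    -- unfold
      rw [powD_apply, Finset.sum_range_succ]
      simp only [ContinuousLinearMap.add_apply, ContinuousLinearMap.smul_apply,
        ContinuousLinearMap.smulRight_apply, ContinuousLinearMap.coe_id', id_eq,
        smul_eq_mul, powD_apply, Finset.sum_mul]
      rw [add_comm]
      congr 1
      · simp
      · refine Finset.sum_congr rfl fun s hs => ?_
        simp only [Finset.mem_range] at hs
        rw [show n + 1 - 1 - s = (n - 1 - s) + 1 from by omega, pow_succ]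
        simp [mul_assoc]
    rw [e2]; exact h2

noncomputable def powD2 (n : ℕ) (v p : H) : H →L[ℝ] H :=
  ∑ s ∈ Finset.range n,
    ((p ^ s * v) • powD (n - 1 - s) p
      + ((powD s p).smulRight v).smulRight (p ^ (n - 1 - s)))

lemma hasFDerivAt_powD2 (n : ℕ) (v p : H) :
    HasFDerivAt (fun q : H => ∑ s ∈ Finset.range n, q ^ s * v * q ^ (n - 1 - s))
      (powD2 n v p) p := by
  refine (HasFDerivAt.fun_sum fun s _ =>
    ((hasFDerivAt_qpow s p).mul_const' v).mul' (hasFDerivAt_qpow (n - 1 - s) p)).congr_fderiv ?_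
  ext w <;> simp [powD2, mul_assoc]

lemma powD2_apply (n : ℕ) (v p w : H) :
    powD2 n v p w = ∑ s ∈ Finset.range n,
      (p ^ s * v * (powD (n - 1 - s) p w) + (powD s p w) * v * p ^ (n - 1 - s)) := by
  simp [powD2, mul_assoc]


lemma fderiv_fun_eq (n : ℕ) (v : H) :
    (fun q : H => fderiv ℝ (fun w : H => w ^ n) q v)
      = fun q : H => ∑ s ∈ Finset.range n, q ^ s * v * q ^ (n - 1 - s) :=
  funext fun q => by rw [(hasFDerivAt_qpow n q).fderiv, powD_apply]

lemma lap_four (n : ℕ) (q : H) :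
    quatLaplacian (fun w : H => w ^ n) q
      = powD2 n 1 q 1 + powD2 n qI q qI + powD2 n qJ q qJ + powD2 n qK q qK := by
  unfold quatLaplacian
  rw [fderiv_fun_eq n 1, fderiv_fun_eq n qI, fderiv_fun_eq n qJ, fderiv_fun_eq n qK,
    (hasFDerivAt_powD2 n 1 q).fderiv, (hasFDerivAt_powD2 n qI q).fderiv,
    (hasFDerivAt_powD2 n qJ q).fderiv, (hasFDerivAt_powD2 n qK q).fderiv]

lemma sand_eq (a : H) : a + qI * a * qI + qJ * a * qJ + qK * a * qK = (-2 : ℝ) • star a := by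
  ext <;> simp only [Quaternion.re_mul, Quaternion.imI_mul, Quaternion.imJ_mul, Quaternion.imK_mul, Quaternion.re_add, Quaternion.imI_add, Quaternion.imJ_add, Quaternion.imK_add] <;> simp [qI, qJ, qK] <;> ring

lemma star_comm_q (q : H) : Commute (star q) q := by
  unfold Commute SemiconjBy
  ext <;> simp <;> ring

lemma mono_merge (q : H) (a b c : ℕ) :
    q ^ a * ((star q) ^ b * q ^ c) = q ^ (a + c) * (star q) ^ b := by
  rw [((star_comm_q q).pow_pow b c).eq, ← mul_assoc, ← pow_add]

lemma mono_merge' (q : H) (a b c : ℕ) :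
    q ^ a * (star (q ^ b) * q ^ c) = q ^ (a + c) * (star q) ^ b := by
  rw [star_pow]; exact mono_merge q a b c

lemma collapseA (a b c : ℕ) (q : H) :
    q ^ a * 1 * (q ^ b * 1 * q ^ c) + q ^ a * qI * (q ^ b * qI * q ^ c)
      + q ^ a * qJ * (q ^ b * qJ * q ^ c) + q ^ a * qK * (q ^ b * qK * q ^ c)
      = (-2 : ℝ) • (q ^ (a + c) * (star q) ^ b) := by
  have key : q ^ a * 1 * (q ^ b * 1 * q ^ c) + q ^ a * qI * (q ^ b * qI * q ^ c)
      + q ^ a * qJ * (q ^ b * qJ * q ^ c) + q ^ a * qK * (q ^ b * qK * q ^ c)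
      = q ^ a * ((q ^ b + qI * q ^ b * qI + qJ * q ^ b * qJ + qK * q ^ b * qK) * q ^ c) := by
    noncomm_ring
  rw [key, sand_eq, smul_mul_assoc, mul_smul_comm, mono_merge']

lemma collapseB (a b c : ℕ) (q : H) :
    q ^ a * 1 * q ^ b * 1 * q ^ c + q ^ a * qI * q ^ b * qI * q ^ c
      + q ^ a * qJ * q ^ b * qJ * q ^ c + q ^ a * qK * q ^ b * qK * q ^ c
      = (-2 : ℝ) • (q ^ (a + c) * (star q) ^ b) := by
  have key : q ^ a * 1 * q ^ b * 1 * q ^ c + q ^ a * qI * q ^ b * qI * q ^ c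
      + q ^ a * qJ * q ^ b * qJ * q ^ c + q ^ a * qK * q ^ b * qK * q ^ c
      = q ^ a * ((q ^ b + qI * q ^ b * qI + qJ * q ^ b * qJ + qK * q ^ b * qK) * q ^ c) := by
    noncomm_ring
  rw [key, sand_eq, smul_mul_assoc, mul_smul_comm, mono_merge']

lemma lap_sum (n : ℕ) (q : H) :
    quatLaplacian (fun w : H => w ^ n) q
      = ∑ s ∈ Finset.range n,
          (∑ t ∈ Finset.range (n - 1 - s),
              (-2 : ℝ) • (q ^ (s + (n - 1 - s - 1 - t)) * (star q) ^ t)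
            + ∑ t ∈ Finset.range s,
              (-2 : ℝ) • (q ^ (t + (n - 1 - s)) * (star q) ^ (s - 1 - t))) := by
  rw [lap_four]
  simp only [powD2_apply, powD_apply, Finset.mul_sum, Finset.sum_mul]
  rw [← Finset.sum_add_distrib, ← Finset.sum_add_distrib, ← Finset.sum_add_distrib]
  refine Finset.sum_congr rfl fun s _ => ?_
  rw [show ∀ A1 B1 A2 B2 A3 B3 A4 B4 : H,
      (A1 + B1) + (A2 + B2) + (A3 + B3) + (A4 + B4)
        = (A1 + A2 + A3 + A4) + (B1 + B2 + B3 + B4) from by intros; abel]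
  congr 1
  · rw [← Finset.sum_add_distrib, ← Finset.sum_add_distrib, ← Finset.sum_add_distrib]
    exact Finset.sum_congr rfl fun t _ => collapseA s t (n - 1 - s - 1 - t) q
  · rw [← Finset.sum_add_distrib, ← Finset.sum_add_distrib, ← Finset.sum_add_distrib]
    exact Finset.sum_congr rfl fun t _ => collapseB t (s - 1 - t) (n - 1 - s) q

lemma tri_count (n : ℕ) (g : ℕ → H) :
    ∑ s ∈ Finset.range (n + 1), ∑ t ∈ Finset.range s, g t
      = ∑ b ∈ Finset.range n, (n - b) • g b := by
  induction n with
  | zero => simp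
  | succ n ih =>
    rw [Finset.sum_range_succ, ih]
    have : ∀ b ∈ Finset.range (n + 1), (n + 1 - b) • g b
        = (n - b) • g b + g b := by
      intro b hb
      simp only [Finset.mem_range] at hb
      rw [show n + 1 - b = (n - b) + 1 from by omega, add_nsmul, one_nsmul]
    rw [Finset.sum_congr rfl this, Finset.sum_add_distrib, Finset.sum_range_succ,
      Finset.sum_range_succ (fun b => (n - b) • g b)]
    simp

lemma tri_count' (n : ℕ) (g : ℕ → H) :
    ∑ s ∈ Finset.range n, ∑ t ∈ Finset.range s, g t
      = ∑ b ∈ Finset.range (n - 1), (n - 1 - b) • g b := by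
  cases n with
  | zero => simp
  | succ n => simpa using tri_count n g

lemma lap_closed (n : ℕ) (q : H) :
    quatLaplacian (fun w : H => w ^ n) q
      = ∑ b ∈ Finset.range (n - 1),
          (n - 1 - b) • ((-4 : ℝ) • (q ^ (n - 2 - b) * (star q) ^ b)) := by
  rw [lap_sum]
  have e1 : ∀ s ∈ Finset.range n,
      (∑ t ∈ Finset.range (n - 1 - s),
          (-2 : ℝ) • (q ^ (s + (n - 1 - s - 1 - t)) * (star q) ^ t))
        = ∑ t ∈ Finset.range (n - 1 - s), (-2 : ℝ) • (q ^ (n - 2 - t) * (star q) ^ t) := by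
    intro s hs
    simp only [Finset.mem_range] at hs
    refine Finset.sum_congr rfl fun t ht => ?_
    simp only [Finset.mem_range] at ht
    congr 3
    omega
  have e2 : ∀ s ∈ Finset.range n,
      (∑ t ∈ Finset.range s, (-2 : ℝ) • (q ^ (t + (n - 1 - s)) * (star q) ^ (s - 1 - t)))
        = ∑ t ∈ Finset.range s, (-2 : ℝ) • (q ^ (n - 2 - t) * (star q) ^ t) := by
    intro s hs
    simp only [Finset.mem_range] at hs
    rw [← Finset.sum_range_reflect (fun t => (-2 : ℝ) • (q ^ (n - 2 - t) * (star q) ^ t)) s]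
    refine Finset.sum_congr rfl fun t ht => ?_
    simp only [Finset.mem_range] at ht
    congr 3
    omega
  calc ∑ s ∈ Finset.range n,
          (∑ t ∈ Finset.range (n - 1 - s),
              (-2 : ℝ) • (q ^ (s + (n - 1 - s - 1 - t)) * (star q) ^ t)
            + ∑ t ∈ Finset.range s,
              (-2 : ℝ) • (q ^ (t + (n - 1 - s)) * (star q) ^ (s - 1 - t)))
      = ∑ s ∈ Finset.range n,
          ((∑ t ∈ Finset.range (n - 1 - s), (-2 : ℝ) • (q ^ (n - 2 - t) * (star q) ^ t))
            + ∑ t ∈ Finset.range s, (-2 : ℝ) • (q ^ (n - 2 - t) * (star q) ^ t)) := by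
        refine Finset.sum_congr rfl fun s hs => ?_
        rw [e1 s hs, e2 s hs]
    _ = ∑ s ∈ Finset.range n,
          ((∑ t ∈ Finset.range s, (-2 : ℝ) • (q ^ (n - 2 - t) * (star q) ^ t))
            + ∑ t ∈ Finset.range s, (-2 : ℝ) • (q ^ (n - 2 - t) * (star q) ^ t)) := by
        rw [Finset.sum_add_distrib, Finset.sum_add_distrib]
        congr 1
        rw [← Finset.sum_range_reflect
          (fun s => ∑ t ∈ Finset.range (n - 1 - s),
            (-2 : ℝ) • (q ^ (n - 2 - t) * (star q) ^ t)) n]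
        refine Finset.sum_congr rfl fun s hs => ?_
        simp only [Finset.mem_range] at hs
        rw [show n - 1 - (n - 1 - s) = s from by omega]
    _ = ∑ s ∈ Finset.range n, ∑ t ∈ Finset.range s,
          ((-4 : ℝ) • (q ^ (n - 2 - t) * (star q) ^ t)) := by
        refine Finset.sum_congr rfl fun s _ => ?_
        rw [← Finset.sum_add_distrib]
        refine Finset.sum_congr rfl fun t _ => ?_
        rw [← add_smul]
        norm_num
    _ = _ := tri_count' n _

noncomputable def starCLM : H →L[ℝ] H :=
  LinearMap.mkContinuous
    { toFun := (star : H → H), map_add' := star_add,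
      map_smul' := fun r a => by simp }
    1 (fun x => by simp [Quaternion.norm_star])

lemma starCLM_apply (v : H) : starCLM v = star v := rfl

noncomputable def monD (m b : ℕ) (p : H) : H →L[ℝ] H :=
  p ^ m • ((powD b (star p)).comp starCLM) + (powD m p).smulRight ((star p) ^ b)

lemma hasFDerivAt_mon (m b : ℕ) (p : H) :
    HasFDerivAt (fun q : H => q ^ m * (star q) ^ b) (monD m b p) p := by
  have hs : HasFDerivAt (fun q : H => (star q) ^ b) ((powD b (star p)).comp starCLM) p := by
    exact (hasFDerivAt_qpow b (star p)).comp p starCLM.hasFDerivAt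
  exact (hasFDerivAt_qpow m p).mul' hs

lemma monD_apply (m b : ℕ) (p w : H) :
    monD m b p w
      = p ^ m * (∑ s ∈ Finset.range b, (star p) ^ s * star w * (star p) ^ (b - 1 - s))
        + (∑ s ∈ Finset.range m, p ^ s * w * p ^ (m - 1 - s)) * (star p) ^ b := by
  simp [monD, powD_apply, starCLM_apply]

lemma sandStar_eq (a : H) :
    a + qI * a * star qI + qJ * a * star qJ + qK * a * star qK = (2 : ℝ) • (a + star a) := by
  ext <;> simp only [Quaternion.re_mul, Quaternion.imI_mul, Quaternion.imJ_mul, Quaternion.imK_mul, Quaternion.re_add, Quaternion.imI_add, Quaternion.imJ_add, Quaternion.imK_add, Quaternion.re_star, Quaternion.imI_star, Quaternion.imJ_star, Quaternion.imK_star] <;> simp [qI, qJ, qK] <;> ring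

lemma collapseC (A B C : H) :
    1 * (A * (B * 1 * C)) + qI * (A * (B * star qI * C))
      + qJ * (A * (B * star qJ * C)) + qK * (A * (B * star qK * C))
      = (2 : ℝ) • ((A * B + star (A * B)) * C) := by
  have key : 1 * (A * (B * 1 * C)) + qI * (A * (B * star qI * C))
      + qJ * (A * (B * star qJ * C)) + qK * (A * (B * star qK * C))
      = (A * B + qI * (A * B) * star qI + qJ * (A * B) * star qJ + qK * (A * B) * star qK)
          * C := by
    noncomm_ring
  rw [key, sandStar_eq, smul_mul_assoc]

lemma collapseD (A B C : H) :
    1 * (A * 1 * B * C) + qI * (A * qI * B * C)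
      + qJ * (A * qJ * B * C) + qK * (A * qK * B * C)
      = (-2 : ℝ) • (star A * (B * C)) := by
  have key : 1 * (A * 1 * B * C) + qI * (A * qI * B * C)
      + qJ * (A * qJ * B * C) + qK * (A * qK * B * C)
      = (A + qI * A * qI + qJ * A * qJ + qK * A * qK) * (B * C) := by
    noncomm_ring
  rw [key, sand_eq, smul_mul_assoc]

lemma collapseC' (A B C : H) :
    1 * (A * (B * star 1 * C)) + qI * (A * (B * star qI * C))
      + qJ * (A * (B * star qJ * C)) + qK * (A * (B * star qK * C))
      = (2 : ℝ) • ((A * B + star (A * B)) * C) := by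
  rw [star_one]; rw [show B * 1 * C = B * 1 * C from rfl] at *; rw [← collapseC A B C]

lemma normC (p : H) (m s c : ℕ) :
    ((2 : ℝ) • ((p ^ m * (star p) ^ s + star (p ^ m * (star p) ^ s)) * (star p) ^ c) : H)
      = (2 : ℝ) • (p ^ m * (star p) ^ (s + c) + p ^ s * (star p) ^ (m + c)) := by
  rw [star_mul, star_pow, star_star, star_pow, add_mul, mul_assoc, mul_assoc,
    ← pow_add, ← pow_add]

lemma normD (p : H) (s d b : ℕ) :
    ((-2 : ℝ) • (star (p ^ s) * (p ^ d * (star p) ^ b)) : H)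
      = (-2 : ℝ) • (p ^ d * (star p) ^ (s + b)) := by
  rw [star_pow, ← mul_assoc, ((star_comm_q p).pow_pow s d).eq, mul_assoc, ← pow_add]

lemma fueter_mon (m b : ℕ) (p : H) :
    monD m b p 1 + qI * monD m b p qI + qJ * monD m b p qJ + qK * monD m b p qK
      = ∑ s ∈ Finset.range b,
          (2 : ℝ) • (p ^ m * (star p) ^ (b - 1) + p ^ s * (star p) ^ (m + b - 1 - s))
        + ∑ s ∈ Finset.range m, (-2 : ℝ) • (p ^ (m - 1 - s) * (star p) ^ (s + b)) := by
  rw [show monD m b p 1 = 1 * monD m b p 1 from (one_mul _).symm]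
  simp only [monD_apply, Finset.mul_sum, Finset.sum_mul, mul_add]
  rw [show ∀ A1 B1 A2 B2 A3 B3 A4 B4 : H,
      (A1 + B1) + (A2 + B2) + (A3 + B3) + (A4 + B4)
        = (A1 + A2 + A3 + A4) + (B1 + B2 + B3 + B4) from by intros; abel]
  congr 1
  · rw [← Finset.sum_add_distrib, ← Finset.sum_add_distrib, ← Finset.sum_add_distrib]
    refine Finset.sum_congr rfl fun s hs => ?_
    simp only [Finset.mem_range] at hs
    rw [collapseC' (p ^ m) ((star p) ^ s) ((star p) ^ (b - 1 - s)), normC,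
      show s + (b - 1 - s) = b - 1 from by omega,
      show m + (b - 1 - s) = m + b - 1 - s from by omega]
  · rw [← Finset.sum_add_distrib, ← Finset.sum_add_distrib, ← Finset.sum_add_distrib]
    refine Finset.sum_congr rfl fun s hs => ?_
    simp only [Finset.mem_range] at hs
    rw [collapseD (p ^ s) (p ^ (m - 1 - s)) ((star p) ^ b), normD]


noncomputable def Lam (n : ℕ) (q : H) : H :=
  ∑ b ∈ Finset.range (n - 1),
    (((n - 1 - b : ℕ) : ℝ) * (-4)) • (q ^ (n - 2 - b) * (star q) ^ b)

lemma lap_fun_eq (n : ℕ) :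
    (fun q : H => quatLaplacian (fun w => w ^ n) q) = Lam n := by
  funext q
  rw [lap_closed]
  refine Finset.sum_congr rfl fun b _ => ?_
  rw [mul_smul, Nat.cast_smul_eq_nsmul]

noncomputable def LamD (n : ℕ) (p : H) : H →L[ℝ] H :=
  ∑ b ∈ Finset.range (n - 1), (((n - 1 - b : ℕ) : ℝ) * (-4)) • monD (n - 2 - b) b p

lemma hasFDerivAt_Lam (n : ℕ) (p : H) : HasFDerivAt (Lam n) (LamD n p) p := by
  unfold Lam LamD
  exact HasFDerivAt.fun_sum fun b _ =>
    (hasFDerivAt_mon (n - 2 - b) b p).const_smul (((n - 1 - b : ℕ) : ℝ) * (-4))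

lemma fueterL_lam (n : ℕ) (p : H) :
    fueterL (fun q => quatLaplacian (fun w => w ^ n) q) p
      = ∑ b ∈ Finset.range (n - 1), (((n - 1 - b : ℕ) : ℝ) * (-4)) •
          (monD (n - 2 - b) b p 1 + qI * monD (n - 2 - b) b p qI
            + qJ * monD (n - 2 - b) b p qJ + qK * monD (n - 2 - b) b p qK) := by
  unfold fueterL
  rw [lap_fun_eq, (hasFDerivAt_Lam n p).fderiv]
  simp only [LamD, ContinuousLinearMap.coe_sum', Finset.sum_apply,
    ContinuousLinearMap.coe_smul', Pi.smul_apply]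
  rw [Finset.mul_sum, Finset.mul_sum, Finset.mul_sum,
    ← Finset.sum_add_distrib, ← Finset.sum_add_distrib, ← Finset.sum_add_distrib]
  refine Finset.sum_congr rfl fun b _ => ?_
  rw [mul_smul_comm, mul_smul_comm, mul_smul_comm, smul_add, smul_add, smul_add]

lemma Wb (N b : ℕ) (hb : b < N + 2) (p : H) :
    (∑ s ∈ Finset.range b,
        (2 : ℝ) • (p ^ (N + 1 - b) * (star p) ^ (b - 1)
          + p ^ s * (star p) ^ (N + 1 - b + b - 1 - s)))
      + ∑ s ∈ Finset.range (N + 1 - b),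
          (-2 : ℝ) • (p ^ (N + 1 - b - 1 - s) * (star p) ^ (s + b))
    = (2 : ℝ) • (b • (p ^ (N + 1 - b) * (star p) ^ (b - 1)))
      + (2 : ℝ) • (∑ s ∈ Finset.range b, p ^ s * (star p) ^ (N - s))
      + (-2 : ℝ) • (∑ s ∈ Finset.range (N + 1 - b), p ^ (N - b - s) * (star p) ^ (s + b)) := by
  have h1 : ∑ s ∈ Finset.range b,
      (2 : ℝ) • (p ^ (N + 1 - b) * (star p) ^ (b - 1)
        + p ^ s * (star p) ^ (N + 1 - b + b - 1 - s))
      = ∑ s ∈ Finset.range b,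
        ((2 : ℝ) • (p ^ (N + 1 - b) * (star p) ^ (b - 1))
          + (2 : ℝ) • (p ^ s * (star p) ^ (N - s))) := by
    refine Finset.sum_congr rfl fun s hs => ?_
    simp only [Finset.mem_range] at hs
    rw [show N + 1 - b + b - 1 - s = N - s from by omega, smul_add]
  have h2 : ∑ s ∈ Finset.range (N + 1 - b),
      (-2 : ℝ) • (p ^ (N + 1 - b - 1 - s) * (star p) ^ (s + b))
      = ∑ s ∈ Finset.range (N + 1 - b),
        (-2 : ℝ) • (p ^ (N - b - s) * (star p) ^ (s + b)) := by
    refine Finset.sum_congr rfl fun s _ => ?_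
    rw [show N + 1 - b - 1 - s = N - b - s from by omega]
  rw [h1, h2, Finset.sum_add_distrib, Finset.sum_const, Finset.card_range,
    ← Finset.smul_sum, ← Finset.smul_sum, smul_comm (b : ℕ) (2 : ℝ), add_assoc]

lemma coeffs (N β : ℕ) (h : β ≤ N) :
    ∑ b ∈ Finset.range (β + 1), (N + 2 - b)
      = (N + 1 - β) * (β + 1) + ∑ b ∈ Finset.Ico (N + 1 - β) (N + 2), (N + 2 - b) := by
  induction β with
  | zero =>
    rw [Finset.sum_Ico_eq_sum_range]
    simp
  | succ β ih =>
    have hβ : β ≤ N := by omega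
    obtain ⟨k, rfl⟩ : ∃ k, N = β + 1 + k := ⟨N - (β + 1), by omega⟩
    rw [Finset.sum_range_succ, ih hβ,
      show β + 1 + k + 2 - (β + 1) = k + 2 from by omega,
      show β + 1 + k + 1 - β = k + 2 from by omega,
      show β + 1 + k + 1 - (β + 1) = k + 1 from by omega,
      Finset.sum_eq_sum_Ico_succ_bot (show k + 1 < β + 1 + k + 2 from by omega),
      show k + 1 + 1 = k + 2 from rfl,
      show β + 1 + k + 2 - (k + 1) = β + 2 from by omega]
    ring

lemma G2 (N : ℕ) (p : H) :
    ∑ b ∈ Finset.range (N + 2),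
        ((N + 2 - b : ℕ) : ℝ) • (b • (p ^ (N + 1 - b) * (star p) ^ (b - 1)))
      = ∑ β ∈ Finset.range (N + 1),
          (((N + 1 - β) * (β + 1) : ℕ) : ℝ) • (p ^ (N - β) * (star p) ^ β) := by
  rw [Finset.sum_range_succ'
    (fun b => ((N + 2 - b : ℕ) : ℝ) • (b • (p ^ (N + 1 - b) * (star p) ^ (b - 1)))) (N + 1)]
  simp only [zero_smul, smul_zero, add_zero]
  refine Finset.sum_congr rfl fun β hβ => ?_
  simp only [Finset.mem_range] at hβ
  rw [show N + 2 - (β + 1) = N + 1 - β from by omega,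
    show N + 1 - (β + 1) = N - β from by omega,
    show β + 1 - 1 = β from by omega, Nat.cast_mul, mul_smul]
  congr 1
  exact (Nat.cast_smul_eq_nsmul ℝ _ _).symm

lemma G1 (N : ℕ) (p : H) :
    ∑ b ∈ Finset.range (N + 2), ((N + 2 - b : ℕ) : ℝ) •
        ∑ s ∈ Finset.range (N + 1 - b), (p ^ (N - b - s) * (star p) ^ (s + b))
      = ∑ β ∈ Finset.range (N + 1),
          (((∑ b ∈ Finset.range (β + 1), (N + 2 - b)) : ℕ) : ℝ)
            • (p ^ (N - β) * (star p) ^ β) := by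
  have e1 : ∀ b ∈ Finset.range (N + 2),
      ((N + 2 - b : ℕ) : ℝ) •
          ∑ s ∈ Finset.range (N + 1 - b), (p ^ (N - b - s) * (star p) ^ (s + b))
        = ∑ β ∈ Finset.Ico b (N + 1),
            ((N + 2 - b : ℕ) : ℝ) • (p ^ (N - β) * (star p) ^ β) := by
    intro b _
    rw [Finset.smul_sum, Finset.sum_Ico_eq_sum_range,
      show N + 1 - b = N + 1 - b from rfl]
    refine Finset.sum_congr rfl fun s _ => ?_
    rw [show N - b - s = N - (b + s) from by omega, show s + b = b + s from by omega]
  rw [Finset.sum_congr rfl e1,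
    Finset.sum_comm' (t' := Finset.range (N + 1)) (s' := fun β => Finset.range (β + 1))
      (fun b β => by
        simp only [Finset.mem_range, Finset.mem_Ico]
        omega)]
  refine Finset.sum_congr rfl fun β _ => ?_
  rw [← Finset.sum_smul, Nat.cast_sum]

lemma G3 (N : ℕ) (p : H) :
    ∑ b ∈ Finset.range (N + 2), ((N + 2 - b : ℕ) : ℝ) •
        ∑ s ∈ Finset.range b, (p ^ s * (star p) ^ (N - s))
      = ∑ β ∈ Finset.range (N + 1),
          (((∑ b ∈ Finset.Ico (N + 1 - β) (N + 2), (N + 2 - b)) : ℕ) : ℝ)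
            • (p ^ (N - β) * (star p) ^ β) := by
  have e1 : ∀ b ∈ Finset.range (N + 2),
      ((N + 2 - b : ℕ) : ℝ) • ∑ s ∈ Finset.range b, (p ^ s * (star p) ^ (N - s))
        = ∑ s ∈ Finset.range b, ((N + 2 - b : ℕ) : ℝ) • (p ^ s * (star p) ^ (N - s)) :=
    fun b _ => Finset.smul_sum
  rw [Finset.sum_congr rfl e1,
    Finset.sum_comm' (t' := Finset.range (N + 1))
      (s' := fun s => Finset.Ico (s + 1) (N + 2))
      (fun b s => by
        simp only [Finset.mem_range, Finset.mem_Ico]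
        omega)]
  have e2 : ∀ s ∈ Finset.range (N + 1),
      ∑ b ∈ Finset.Ico (s + 1) (N + 2), ((N + 2 - b : ℕ) : ℝ) • (p ^ s * (star p) ^ (N - s))
        = (((∑ b ∈ Finset.Ico (s + 1) (N + 2), (N + 2 - b)) : ℕ) : ℝ)
            • (p ^ s * (star p) ^ (N - s)) := by
    intro s _
    rw [← Finset.sum_smul, Nat.cast_sum]
  rw [Finset.sum_congr rfl e2,
    ← Finset.sum_range_reflect
      (fun β => (((∑ b ∈ Finset.Ico (N + 1 - β) (N + 2), (N + 2 - b)) : ℕ) : ℝ)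
        • (p ^ (N - β) * (star p) ^ β)) (N + 1)]
  refine Finset.sum_congr rfl fun s hs => ?_
  simp only [Finset.mem_range] at hs
  rw [show N + 1 - 1 - s = N - s from by omega,
    show N + 1 - (N - s) = s + 1 from by omega,
    show N - (N - s) = s from by omega]

/-- Fueter's theorem for the power functions: `D_l Δ (pⁿ) = 0` on all of `ℍ`. -/
theorem fueter_laplacian_pow (n : ℕ) (p : Quaternion ℝ) :
    fueterL (fun q => quatLaplacian (fun w => w ^ n) q) p = 0 := by
  rw [fueterL_lam]
  rcases Nat.lt_or_ge n 3 with h | h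
  · interval_cases n
    · simp
    · simp
    · rw [Finset.sum_range_one, fueter_mon]
      simp
  · obtain ⟨N, rfl⟩ : ∃ N, n = N + 3 := ⟨n - 3, by omega⟩
    rw [show N + 3 - 1 = N + 2 from rfl, show N + 3 - 2 = N + 1 from rfl]
    have step1 : ∀ b ∈ Finset.range (N + 2),
        (((N + 2 - b : ℕ) : ℝ) * (-4)) • (monD (N + 1 - b) b p 1
            + qI * monD (N + 1 - b) b p qI + qJ * monD (N + 1 - b) b p qJ
            + qK * monD (N + 1 - b) b p qK)
          = (((N + 2 - b : ℕ) : ℝ) * (-4)) •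
              ((2 : ℝ) • (b • (p ^ (N + 1 - b) * (star p) ^ (b - 1)))
               + (2 : ℝ) • (∑ s ∈ Finset.range b, p ^ s * (star p) ^ (N - s))
               + (-2 : ℝ) • (∑ s ∈ Finset.range (N + 1 - b),
                    p ^ (N - b - s) * (star p) ^ (s + b))) := by
      intro b hb
      simp only [Finset.mem_range] at hb
      rw [fueter_mon, Wb N b hb p]
    rw [Finset.sum_congr rfl step1]
    have split : ∑ b ∈ Finset.range (N + 2), (((N + 2 - b : ℕ) : ℝ) * (-4)) •
              ((2 : ℝ) • (b • (p ^ (N + 1 - b) * (star p) ^ (b - 1)))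
               + (2 : ℝ) • (∑ s ∈ Finset.range b, p ^ s * (star p) ^ (N - s))
               + (-2 : ℝ) • (∑ s ∈ Finset.range (N + 1 - b),
                    p ^ (N - b - s) * (star p) ^ (s + b)))
        = (-8 : ℝ) • (∑ b ∈ Finset.range (N + 2),
              ((N + 2 - b : ℕ) : ℝ) • (b • (p ^ (N + 1 - b) * (star p) ^ (b - 1))))
          + (-8 : ℝ) • (∑ b ∈ Finset.range (N + 2), ((N + 2 - b : ℕ) : ℝ) •
              ∑ s ∈ Finset.range b, p ^ s * (star p) ^ (N - s))
          + (8 : ℝ) • (∑ b ∈ Finset.range (N + 2), ((N + 2 - b : ℕ) : ℝ) •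
              ∑ s ∈ Finset.range (N + 1 - b), p ^ (N - b - s) * (star p) ^ (s + b)) := by
      rw [Finset.smul_sum, Finset.smul_sum, Finset.smul_sum,
        ← Finset.sum_add_distrib, ← Finset.sum_add_distrib]
      refine Finset.sum_congr rfl fun b _ => ?_
      module
    rw [split, G2 N p, G3 N p, G1 N p, Finset.smul_sum, Finset.smul_sum, Finset.smul_sum,
      ← Finset.sum_add_distrib, ← Finset.sum_add_distrib]
    refine Finset.sum_eq_zero fun β hβ => ?_
    simp only [Finset.mem_range] at hβ
    rw [coeffs N β (by omega), Nat.cast_add]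
    module
end
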